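/- Let R be a regex over Σ, w a word, and k ∈ ℕ. If w has at least k distinct parse trees of R*, then the word w ++ w has at least k² distinct parse trees of R*. (Claim from the proof sketch of the paper's Theorem 3: if an input can be matched in k ways by R*, then its doubling can be matched in k·k ways.) -/

import Mathlib

/-! Shared definitions: words, word power, parse trees of regular expressions,
(un)ambiguity, finite/infinite ambiguity, and the Brabrand–Thomsen overlap. -/

universe u

variable {α : Type u}

/-- `wpow w n` is the `n`-fold concatenation `w^n` of the word `w` with itself. -/
def wpow (w : List α) : ℕ → List α
  | 0 => []
  | n + 1 => w ++ wpow w n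

/-- Parse trees of a regular expression for a word, defined inductively:
the regex `ε` has a unique parse tree for the empty word; the character regex
for `a` has a unique parse tree for the word `[a]`; a parse tree of `R₁ + R₂`
(alternation) for `w` is a parse tree of `R₁` for `w` or a parse tree of `R₂`
for `w` (the two sides distinct); a parse tree of `R₁ * R₂` (concatenation)
for `w` is a decomposition `w = u ++ v` with parse trees of `R₁` for `u` and
of `R₂` for `v`; a parse tree of `R*` for `w` is a finite list of words
(possibly empty entries) concatenating to `w` with a parse tree of `R` for each. -/
inductive ParseTree : RegularExpression α → List α → Type u where
  | eps : ParseTree RegularExpression.epsilon []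
  | char (a : α) : ParseTree (RegularExpression.char a) [a]
  | plusLeft {R₁ R₂ : RegularExpression α} {w : List α} :
      ParseTree R₁ w → ParseTree (R₁ + R₂) w
  | plusRight {R₁ R₂ : RegularExpression α} {w : List α} :
      ParseTree R₂ w → ParseTree (R₁ + R₂) w
  | comp {R₁ R₂ : RegularExpression α} {u v : List α} :
      ParseTree R₁ u → ParseTree R₂ v → ParseTree (R₁ * R₂) (u ++ v)
  | starNil {R : RegularExpression α} : ParseTree R.star []
  | starCons {R : RegularExpression α} {u v : List α} :
      ParseTree R u → ParseTree R.star v → ParseTree R.star (u ++ v)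

/-- A regex is unambiguous if every word has at most one parse tree of it. -/
def Unambiguous (R : RegularExpression α) : Prop :=
  ∀ (w : List α) (t₁ t₂ : ParseTree R w), t₁ = t₂

/-- A regex is ambiguous if some word has two distinct parse trees of it. -/
def Ambiguous (R : RegularExpression α) : Prop :=
  ∃ (w : List α) (t₁ t₂ : ParseTree R w), t₁ ≠ t₂

/-- The word `w` has at least `k` distinct parse trees of `R`. -/
def HasAtLeastTrees (R : RegularExpression α) (w : List α) (k : ℕ) : Prop :=
  ∃ l : List (ParseTree R w), l.Nodup ∧ k ≤ l.length

/-- Every word has at most `k` parse trees of `R`. -/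
def BoundedBy (R : RegularExpression α) (k : ℕ) : Prop :=
  ∀ (w : List α) (l : List (ParseTree R w)), l.Nodup → l.length ≤ k

/-- `R` is finitely ambiguous: ambiguous, with a uniform bound on the number
of parse trees of any word. -/
def FinitelyAmbiguous (R : RegularExpression α) : Prop :=
  Ambiguous R ∧ ∃ k : ℕ, BoundedBy R k

/-- `R` is infinitely ambiguous: for every `k` some word has more than `k`
parse trees of `R`. -/
def InfinitelyAmbiguous (R : RegularExpression α) : Prop :=
  ∀ k : ℕ, ∃ w : List α, HasAtLeastTrees R w (k + 1)

/-- Languages `L₁` and `L₂` overlap (nonemptiness of the Brabrand–Thomsen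
overlap operator): there are words `x`, `y` and a nonempty word `a` with
`x ∈ L₁`, `x ++ a ∈ L₁`, `a ++ y ∈ L₂`, and `y ∈ L₂`. -/
def Overlaps (L₁ L₂ : Language α) : Prop :=
  ∃ x y a : List α, a ≠ [] ∧ x ∈ L₁ ∧ x ++ a ∈ L₁ ∧ a ++ y ∈ L₂ ∧ y ∈ L₂

section Aux
variable {α : Type u}

/-- The list of pieces of a star parse tree. -/
def ParseTree.toList {R : RegularExpression α} :
    {w : List α} → ParseTree R.star w → List ((u : List α) × ParseTree R u)
  | _, .starNil => []
  | _, .starCons (u := u) t t' => ⟨u, t⟩ :: t'.toList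

theorem ParseTree.toList_inj_heq {R : RegularExpression α} :
    ∀ {w₁ w₂ : List α} (t₁ : ParseTree R.star w₁) (t₂ : ParseTree R.star w₂),
      t₁.toList = t₂.toList → w₁ = w₂ ∧ HEq t₁ t₂
  | _, _, .starNil, .starNil, _ => ⟨rfl, HEq.rfl⟩
  | _, _, .starNil, .starCons _ _, h => by simp [ParseTree.toList] at h
  | _, _, .starCons _ _, .starNil, h => by simp [ParseTree.toList] at h
  | _, _, .starCons (u := a) (v := b) t t', .starCons (u := c) (v := d) s s', h => by
      simp only [ParseTree.toList, List.cons.injEq] at h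
      obtain ⟨h1, h2⟩ := h
      obtain ⟨hw, ht⟩ := ParseTree.toList_inj_heq t' s' h2
      obtain ⟨hac, hts⟩ := Sigma.mk.inj_iff.mp h1
      subst hac; subst hw
      cases eq_of_heq hts
      cases eq_of_heq ht
      exact ⟨rfl, HEq.rfl⟩

theorem ParseTree.toList_inj {R : RegularExpression α} {w : List α}
    {t₁ t₂ : ParseTree R.star w} (h : t₁.toList = t₂.toList) : t₁ = t₂ :=
  eq_of_heq (ParseTree.toList_inj_heq t₁ t₂ h).2

theorem ParseTree.toList_flatten {R : RegularExpression α} :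
    ∀ {w : List α} (t : ParseTree R.star w), (t.toList.map Sigma.fst).flatten = w
  | _, .starNil => by simp [ParseTree.toList]
  | _, .starCons t t' => by
      simp [ParseTree.toList, ParseTree.toList_flatten t']

theorem ParseTree.toList_ne_nil {R : RegularExpression α}
    (h0 : ¬ Nonempty (ParseTree R ([] : List α))) :
    ∀ {w : List α} (t : ParseTree R.star w), ∀ p ∈ t.toList, p.1 ≠ []
  | _, .starNil => by simp [ParseTree.toList]
  | _, .starCons (u := a) t t' => by
      intro p hp
      simp only [ParseTree.toList, List.mem_cons] at hp
      rcases hp with rfl | hp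
      · rintro rfl; exact h0 ⟨t⟩
      · exact ParseTree.toList_ne_nil h0 t' p hp

/-- Concatenation of star parse trees. -/
def ParseTree.sapp {R : RegularExpression α} :
    {u v : List α} → ParseTree R.star u → ParseTree R.star v →
      ParseTree R.star (u ++ v)
  | _, _, .starNil, s => s
  | _, v, .starCons (u := a) (v := b) t t', s =>
      cast (by rw [List.append_assoc]) (ParseTree.starCons t (t'.sapp s))

theorem ParseTree.toList_cast {R : RegularExpression α} {u v : List α} (h : u = v)
    (h2 : ParseTree R.star u = ParseTree R.star v)
    (t : ParseTree R.star u) :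
    (cast h2 t).toList = t.toList := by
  subst h; simp

theorem ParseTree.toList_sapp {R : RegularExpression α} :
    ∀ {u v : List α} (t : ParseTree R.star u) (s : ParseTree R.star v),
      (t.sapp s).toList = t.toList ++ s.toList
  | _, _, .starNil, s => by simp [ParseTree.sapp, ParseTree.toList]
  | _, v, .starCons (u := a) (v := b) t t', s => by
      simp only [ParseTree.sapp]
      rw [ParseTree.toList_cast (List.append_assoc a b v).symm]
      simp [ParseTree.toList, ParseTree.toList_sapp t' s]

theorem ParseTree.sapp_inj {R : RegularExpression α}
    (h0 : ¬ Nonempty (ParseTree R ([] : List α))) {w : List α}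
    {t₁ s₁ t₂ s₂ : ParseTree R.star w}
    (h : t₁.sapp s₁ = t₂.sapp s₂) : t₁ = t₂ ∧ s₁ = s₂ := by
  have h' := congrArg ParseTree.toList h
  rw [ParseTree.toList_sapp, ParseTree.toList_sapp] at h'
  have key : t₁.toList = t₂.toList := by
    rcases List.append_eq_append_iff.mp h' with ⟨D, hD1, _⟩ | ⟨D, hD1, _⟩
    · -- t₂.toList = t₁.toList ++ D, D pieces of t₂
      have hj : ((t₁.toList ++ D).map Sigma.fst).flatten = w := by
        rw [← hD1]; exact ParseTree.toList_flatten t₂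
      rw [List.map_append, List.flatten_append, ParseTree.toList_flatten t₁] at hj
      have hDnil : (D.map Sigma.fst).flatten = [] := by
        have := hj.symm; simpa using this
      have : D = [] := by
        rcases D with _ | ⟨p, D'⟩
        · rfl
        · exfalso
          have hp : p.1 = [] := by
            have := List.flatten_eq_nil_iff.mp hDnil p.1 (by simp)
            exact this
          have hpmem : p ∈ t₂.toList := by rw [hD1]; simp
          exact ParseTree.toList_ne_nil h0 t₂ p hpmem hp
      rw [hD1, this, List.append_nil]
    · have hj : ((t₂.toList ++ D).map Sigma.fst).flatten = w := by
        rw [← hD1]; exact ParseTree.toList_flatten t₁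
      rw [List.map_append, List.flatten_append, ParseTree.toList_flatten t₂] at hj
      have hDnil : (D.map Sigma.fst).flatten = [] := by
        have := hj.symm; simpa using this
      have : D = [] := by
        rcases D with _ | ⟨p, D'⟩
        · rfl
        · exfalso
          have hp : p.1 = [] :=
            List.flatten_eq_nil_iff.mp hDnil p.1 (by simp)
          have hpmem : p ∈ t₁.toList := by rw [hD1]; simp
          exact ParseTree.toList_ne_nil h0 t₁ p hpmem hp
      rw [hD1, this, List.append_nil]
  refine ⟨ParseTree.toList_inj key, ParseTree.toList_inj ?_⟩
  rw [key] at h'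
  exact List.append_cancel_left h'

/-- Pad a star parse tree with `n` empty-word pieces in front. -/
def ParseTree.pad {R : RegularExpression α} {v : List α}
    (e : ParseTree R ([] : List α)) (T : ParseTree R.star v) : ℕ → ParseTree R.star v
  | 0 => T
  | n + 1 => ParseTree.starCons e (ParseTree.pad e T n)

theorem ParseTree.pad_length {R : RegularExpression α} {v : List α}
    (e : ParseTree R ([] : List α)) (T : ParseTree R.star v) :
    ∀ n : ℕ, (ParseTree.pad e T n).toList.length = n + T.toList.length
  | 0 => by simp [ParseTree.pad]
  | n + 1 => by
      simp [ParseTree.pad, ParseTree.toList, ParseTree.pad_length e T n]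
      omega

theorem ParseTree.pad_inj {R : RegularExpression α} {v : List α}
    (e : ParseTree R ([] : List α)) (T : ParseTree R.star v) :
    Function.Injective (ParseTree.pad e T) := by
  intro m n h
  have := congrArg (fun t => (ParseTree.toList t).length) h
  simp only [ParseTree.pad_length] at this
  omega

end Aux

/-- Claim from the proof sketch of Theorem 3: if `w` has at least `k` distinct
parse trees of `R*`, then `w ++ w` has at least `k²` distinct parse trees of
`R*`. -/
theorem stmt_14 {α : Type u} (R : RegularExpression α) (w : List α) (k : ℕ)
    (h : HasAtLeastTrees R.star w k) :
    HasAtLeastTrees R.star (w ++ w) (k ^ 2) := by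
  classical
  obtain ⟨l, hnd, hlen⟩ := h
  by_cases hE : Nonempty (ParseTree R ([] : List α))
  · rcases Nat.eq_zero_or_pos k with hk | hk
    · exact ⟨[], List.nodup_nil, by simp [hk]⟩
    · have hl : l ≠ [] := by
        intro hl; rw [hl] at hlen; simp at hlen; omega
      obtain ⟨t, _, _⟩ := List.exists_cons_of_ne_nil hl
      obtain ⟨e⟩ := hE
      refine ⟨(List.range (k ^ 2)).map (ParseTree.pad e (t.sapp t)), ?_, ?_⟩
      · exact (List.nodup_range).map (ParseTree.pad_inj e (t.sapp t))
      · simp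
  · refine ⟨(l ×ˢ l).map (fun p => p.1.sapp p.2), ?_, ?_⟩
    · refine (hnd.product hnd).map ?_
      intro p q hpq
      obtain ⟨h1, h2⟩ := ParseTree.sapp_inj hE hpq
      exact Prod.ext h1 h2
    · rw [List.length_map, List.length_product, pow_two]
      exact Nat.mul_le_mul hlen hlen
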